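/- Let e : (0,∞) → ℝ be differentiable on (0,∞) such that for every θ > 0, e′(θ) > 0 and (1 + e(θ) + θ)·e′(θ) > θ(1 + e′(θ)), and suppose e(θ) → 0 as θ → 0⁺. Then for every θ > 0, 1 + e(θ) > √(1 + θ²); equivalently, the specific enthalpy h(θ) = 1 + e(θ) + θ satisfies h(θ) > √(θ² + 1) + θ. -/

import Mathlib

open Set Filter

/-- The relativistic causality condition `e′(θ) > 0`,
`(1+e(θ)+θ)e′(θ) > θ(1+e′(θ))` on `(0,∞)`, together with `e(θ) → 0` as `θ → 0⁺`,
implies `1 + e(θ) > √(1+θ²)` for all `θ > 0`; equivalently the specific enthalpy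
`h(θ) = 1 + e(θ) + θ` satisfies `h(θ) > √(θ²+1) + θ`. -/
theorem stmt19 (e e' : ℝ → ℝ)
    (hderiv : ∀ θ > (0 : ℝ), HasDerivAt e (e' θ) θ)
    (hpos : ∀ θ > (0 : ℝ), 0 < e' θ)
    (hcaus : ∀ θ > (0 : ℝ), θ * (1 + e' θ) < (1 + e θ + θ) * e' θ)
    (hlim : Filter.Tendsto e (nhdsWithin 0 (Set.Ioi 0)) (nhds 0)) :
    ∀ θ > (0 : ℝ),
      Real.sqrt (1 + θ ^ 2) < 1 + e θ ∧
        Real.sqrt (θ ^ 2 + 1) + θ < 1 + e θ + θ := by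
  set F : ℝ → ℝ := fun t => (1 + e t) ^ 2 - t ^ 2 with hFdef
  have hFd : ∀ t ∈ Ioi (0 : ℝ), HasDerivAt F (2 * (1 + e t) * e' t - 2 * t) t := by
    intro t ht
    have h1 := hderiv t ht
    have h2 : HasDerivAt (fun s => (1 + e s) ^ 2) (2 * (1 + e t) * e' t) t := by
      have := ((hasDerivAt_const t (1 : ℝ)).add h1).pow 2
      exact this.congr_deriv (by simp only [Pi.add_apply]; norm_num)
    have h3 : HasDerivAt (fun s : ℝ => s ^ 2) (2 * t) t := by
      simpa using hasDerivAt_pow 2 t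
    exact h2.sub h3
  -- e is strictly monotone on Ioi 0
  have heMono : StrictMonoOn e (Ioi 0) := by
    apply strictMonoOn_of_deriv_pos (convex_Ioi 0)
    · intro t ht
      exact (hderiv t ht).continuousAt.continuousWithinAt
    · intro t ht
      rw [interior_Ioi] at ht
      rw [(hderiv t ht).deriv]
      exact hpos t ht
  -- F is strictly monotone on Ioi 0
  have hFMono : StrictMonoOn F (Ioi 0) := by
    apply strictMonoOn_of_deriv_pos (convex_Ioi 0)
    · intro t ht
      exact (hFd t ht).continuousAt.continuousWithinAt
    · intro t ht
      rw [interior_Ioi] at ht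
      rw [(hFd t ht).deriv]
      have hc := hcaus t ht
      have hp := hpos t ht
      nlinarith
  -- limits
  have hlimF : Tendsto F (nhdsWithin 0 (Ioi 0)) (nhds 1) := by
    have hid : Tendsto (fun t : ℝ => t) (nhdsWithin 0 (Ioi 0)) (nhds 0) :=
      tendsto_id.mono_left nhdsWithin_le_nhds
    have : Tendsto F (nhdsWithin 0 (Ioi 0)) (nhds ((1 + 0) ^ 2 - 0 ^ 2)) :=
      (((tendsto_const_nhds.add hlim).pow 2).sub (hid.pow 2))
    simpa using this
  -- e s ≥ 0 for s > 0
  have he_nonneg : ∀ s > (0 : ℝ), 0 ≤ e s := by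
    intro s hs
    refine le_of_tendsto hlim ?_
    filter_upwards [Ioo_mem_nhdsGT_of_mem (by constructor <;> simp [hs] : (0:ℝ) ∈ Ico 0 s)]
      with t ht
    exact (heMono ht.1 hs ht.2).le
  -- F s ≥ 1 for s > 0
  have hF_ge : ∀ s > (0 : ℝ), 1 ≤ F s := by
    intro s hs
    refine le_of_tendsto hlimF ?_
    filter_upwards [Ioo_mem_nhdsGT_of_mem (by constructor <;> simp [hs] : (0:ℝ) ∈ Ico 0 s)]
      with t ht
    exact (hFMono ht.1 hs ht.2).le
  intro θ hθ
  have hhalf : (0 : ℝ) < θ / 2 := by linarith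
  have hF1 : 1 < F θ := lt_of_le_of_lt (hF_ge (θ / 2) hhalf)
    (hFMono hhalf hθ (by linarith))
  have he1 : 0 < e θ := lt_of_le_of_lt (he_nonneg (θ / 2) hhalf)
    (heMono hhalf hθ (by linarith))
  have hpos1 : (0 : ℝ) < 1 + e θ := by linarith
  have hsq : 1 + θ ^ 2 < (1 + e θ) ^ 2 := by
    have : (1 + e θ) ^ 2 - θ ^ 2 > 1 := hF1
    linarith
  have h₁ : Real.sqrt (1 + θ ^ 2) < 1 + e θ := (Real.sqrt_lt' hpos1).mpr hsq
  refine ⟨h₁, ?_⟩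
  have : Real.sqrt (θ ^ 2 + 1) = Real.sqrt (1 + θ ^ 2) := by ring_nf
  linarith [this ▸ h₁]
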